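/- Let H be a real Hilbert space and f : H → H a 1-Lipschitz map. Suppose (y_n) is a bounded sequence in H weakly converging to y*, with y_n − f(y_n) → 0 strongly. Then y* is a fixed point of f (demiclosedness of Id − f at 0). -/

import Mathlib

open Filter

theorem demiclosedness_id_sub_f
    {H : Type*} [NormedAddCommGroup H] [InnerProductSpace ℝ H] [CompleteSpace H]
    (f : H → H) (hlip : LipschitzWith 1 f)
    (y : ℕ → H) (hbdd : Bornology.IsBounded (Set.range y))
    (ystar : H)
    (hweak : ∀ v : H, Tendsto (fun n => (inner ℝ (y n) v : ℝ)) atTop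
      (nhds (inner ℝ ystar v)))
    (hstrong : Tendsto (fun n => y n - f (y n)) atTop (nhds 0)) :
    f ystar = ystar := by
  set u := ystar - f ystar with hu
  -- bound on ‖y n‖
  obtain ⟨C, hC⟩ := hbdd.exists_norm_le
  have hCn : ∀ n, ‖y n‖ ≤ C := fun n => hC _ (Set.mem_range_self n)
  set M := C + ‖ystar‖ with hM
  have hMn : ∀ n, ‖y n - ystar‖ ≤ M := by
    intro n
    calc ‖y n - ystar‖ ≤ ‖y n‖ + ‖ystar‖ := norm_sub_le _ _
      _ ≤ C + ‖ystar‖ := by linarith [hCn n]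
  set ε : ℕ → ℝ := fun n => ‖y n - f (y n)‖ with hε
  have hεnn : ∀ n, 0 ≤ ε n := fun n => norm_nonneg _
  have hε0 : Tendsto ε atTop (nhds 0) := by
    simpa using hstrong.norm
  -- key inequality
  have key : ∀ n, 2 * (inner ℝ (y n - ystar) u : ℝ) + ‖u‖ ^ 2
      ≤ 2 * ε n * M + ε n ^ 2 := by
    intro n
    have h1 : ‖y n - f ystar‖ ≤ ε n + ‖y n - ystar‖ := by
      calc ‖y n - f ystar‖ = ‖(y n - f (y n)) + (f (y n) - f ystar)‖ := by
            congr 1; abel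
        _ ≤ ‖y n - f (y n)‖ + ‖f (y n) - f ystar‖ := norm_add_le _ _
        _ ≤ ε n + ‖y n - ystar‖ := by
            have := hlip.dist_le_mul (y n) ystar
            simp only [NNReal.coe_one, one_mul, dist_eq_norm] at this
            linarith
    have h2 : ‖y n - f ystar‖ ^ 2 = ‖y n - ystar‖ ^ 2
        + 2 * (inner ℝ (y n - ystar) u : ℝ) + ‖u‖ ^ 2 := by
      have : y n - f ystar = (y n - ystar) + u := by rw [hu]; abel
      rw [this, @norm_add_sq_real]
    have h3 : ‖y n - f ystar‖ ^ 2 ≤ (ε n + ‖y n - ystar‖) ^ 2 :=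
      pow_le_pow_left₀ (norm_nonneg _) h1 2
    have h4 : (ε n + ‖y n - ystar‖) ^ 2
        = ε n ^ 2 + 2 * ε n * ‖y n - ystar‖ + ‖y n - ystar‖ ^ 2 := by ring
    have h5 : 2 * ε n * ‖y n - ystar‖ ≤ 2 * ε n * M := by
      have := hMn n
      nlinarith [hεnn n]
    nlinarith
  -- limits
  have hinner : Tendsto (fun n => (inner ℝ (y n - ystar) u : ℝ)) atTop (nhds 0) := by
    have h := (hweak u).sub_const (inner ℝ ystar u : ℝ)
    simp only [sub_self] at h
    convert h using 2 with n
    rw [inner_sub_left]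
  have hlhs : Tendsto (fun n => 2 * (inner ℝ (y n - ystar) u : ℝ) + ‖u‖ ^ 2)
      atTop (nhds (‖u‖ ^ 2)) := by
    have := (hinner.const_mul 2).add_const (‖u‖ ^ 2)
    simpa using this
  have hrhs : Tendsto (fun n => 2 * ε n * M + ε n ^ 2) atTop (nhds 0) := by
    have h1 := ((hε0.const_mul 2).mul_const M)
    have h2 := hε0.pow 2
    simpa using h1.add h2
  have : ‖u‖ ^ 2 ≤ 0 :=
    le_of_tendsto_of_tendsto' hlhs hrhs key
  have hu0 : u = 0 := by
    have : ‖u‖ = 0 := by nlinarith [norm_nonneg u]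
    exact norm_eq_zero.mp this
  have : ystar - f ystar = 0 := hu0
  linear_combination (norm := abel1) -this
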